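/- Let a group G act on a tree T, and let ℰ be a conjugation-invariant family of subgroups of G such that every member of ℰ fixes a vertex of T and every edge stabilizer of T belongs to ℰ. Let ~ be the equivalence relation on ℰ generated by inclusion (the smallest equivalence relation with A ~ B whenever A ≤ B with A, B ∈ ℰ). If A, B ∈ ℰ satisfy A ~ B and fix vertices a and b of T respectively, then for every edge e lying on the path [a,b] one has G_e ~ A. -/

import Mathlib

/-- The stabilizer of the edge (u,v): elements fixing both endpoints. -/
noncomputable def edgeStab (G : Type*) [Group G] {V : Type*} [MulAction G V] (u v : V) :
    Subgroup G :=
  MulAction.stabilizer G u ⊓ MulAction.stabilizer G v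

/-- The relation on the family ℰ given by nested inclusion; the equivalence relation
generated by inclusion is its equivalence closure `Relation.EqvGen`. -/
def inclRel {G : Type*} [Group G] (ℰ : Set (Subgroup G)) (A B : Subgroup G) : Prop :=
  A ∈ ℰ ∧ B ∈ ℰ ∧ (A ≤ B ∨ B ≤ A)

section
variable {G V : Type*} [Group G] [MulAction G V]

/-- If g fixes a and b, it fixes every vertex on a path from a to b (tree). -/
lemma fix_path_aux (T : SimpleGraph V) (hT : T.IsTree)
    (hact : ∀ (g : G) (u v : V), T.Adj u v → T.Adj (g • u) (g • v))
    {a b : V} (p : T.Walk a b) (hp : p.IsPath) (g : G) (ha : g • a = a) (hb : g • b = b) :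
    ∀ u ∈ p.support, g • u = u := by
  let f : T →g T := ⟨fun v => g • v, fun h => hact g _ _ h⟩
  have hinj : Function.Injective f := MulAction.injective g
  let q : T.Walk a b := (p.map f).copy ha hb
  have hq : q.IsPath := by
    simpa [q] using SimpleGraph.Walk.map_isPath_of_injective hinj hp
  have : q = p := by
    obtain ⟨P, -, hun⟩ := hT.existsUnique_path a b
    rw [hun q hq, hun p hp]
  have hsupp : p.support.map (fun v => g • v) = p.support := by
    have := congrArg SimpleGraph.Walk.support this
    simp [q, SimpleGraph.Walk.support_map] at this
    exact this
  intro u hu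
  clear_value q
  revert hsupp hu
  generalize p.support = l
  induction l with
  | nil => simp
  | cons x xs ih =>
    intro h hu
    simp only [List.map_cons, List.cons.injEq] at h
    rcases List.mem_cons.1 hu with rfl | hu
    · exact h.1
    · exact ih h.2 hu
end

section
variable {G V : Type*} [Group G] [MulAction G V]

lemma eqvgen_mem {ℰ : Set (Subgroup G)} {X Y : Subgroup G}
    (h : Relation.EqvGen (inclRel ℰ) X Y) : X = Y ∨ (X ∈ ℰ ∧ Y ∈ ℰ) := by
  induction h with
  | rel x y h => exact Or.inr ⟨h.1, h.2.1⟩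
  | refl x => exact Or.inl rfl
  | symm x y h ih => tauto
  | trans x y z h1 h2 ih1 ih2 =>
    rcases ih1 with rfl | ⟨h1, h2⟩
    · exact ih2
    · rcases ih2 with rfl | ⟨h3, h4⟩ <;> exact Or.inr ⟨h1, by assumption⟩

lemma le_edgeStab (T : SimpleGraph V) (hT : T.IsTree)
    (hact : ∀ (g : G) (u v : V), T.Adj u v → T.Adj (g • u) (g • v))
    {a b : V} (p : T.Walk a b) (hp : p.IsPath) (H : Subgroup G)
    (ha : ∀ g ∈ H, g • a = a) (hb : ∀ g ∈ H, g • b = b)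
    {u v : V} (he : s(u, v) ∈ p.edges) : H ≤ edgeStab G u v := by
  intro g hg
  have hu := fix_path_aux T hT hact p hp g (ha g hg) (hb g hg) u
    (p.fst_mem_support_of_mem_edges he)
  have hv := fix_path_aux T hT hact p hp g (ha g hg) (hb g hg) v
    (p.snd_mem_support_of_mem_edges he)
  exact ⟨hu, hv⟩

lemma main_aux (T : SimpleGraph V) (hT : T.IsTree)
    (hact : ∀ (g : G) (u v : V), T.Adj u v → T.Adj (g • u) (g • v))
    (ℰ : Set (Subgroup G))
    (hell : ∀ A ∈ ℰ, ∃ v : V, ∀ g ∈ A, g • v = v)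
    (hedge : ∀ u v : V, T.Adj u v → edgeStab G u v ∈ ℰ)
    {A B : Subgroup G} (hsim : Relation.EqvGen (inclRel ℰ) A B) :
    A ∈ ℰ → B ∈ ℰ → ∀ a b : V, (∀ g ∈ A, g • a = a) → (∀ g ∈ B, g • b = b) →
    ∀ (p : T.Walk a b), p.IsPath → ∀ u v : V, s(u, v) ∈ p.edges →
      Relation.EqvGen (inclRel ℰ) (edgeStab G u v) A := by
  classical
  induction hsim with
  | refl X =>
    intro hX _ a b ha hb p hp u v he
    exact Relation.EqvGen.rel _ _
      ⟨hedge u v (p.adj_of_mem_edges he), hX,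
        Or.inr (le_edgeStab T hT hact p hp X ha hb he)⟩
  | rel X Y h =>
    intro hX hY a b ha hb p hp u v he
    obtain ⟨hX', hY', hle | hle⟩ := h
    · have hb' : ∀ g ∈ X, g • b = b := fun g hg => hb g (hle hg)
      exact Relation.EqvGen.rel _ _
        ⟨hedge u v (p.adj_of_mem_edges he), hX,
          Or.inr (le_edgeStab T hT hact p hp X ha hb' he)⟩
    · have ha' : ∀ g ∈ Y, g • a = a := fun g hg => ha g (hle hg)
      refine Relation.EqvGen.trans _ _ _ (Relation.EqvGen.rel _ _
        ⟨hedge u v (p.adj_of_mem_edges he), hY,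
          Or.inr (le_edgeStab T hT hact p hp Y ha' hb he)⟩)
        (Relation.EqvGen.rel _ _ ⟨hY, hX, Or.inl hle⟩)
  | symm X Y h ih =>
    intro hY hX a b ha hb p hp u v he
    have he' : s(u, v) ∈ p.reverse.edges := by
      rw [SimpleGraph.Walk.edges_reverse, List.mem_reverse]; exact he
    have := ih hX hY b a hb ha p.reverse hp.reverse u v he'
    exact Relation.EqvGen.trans _ _ _ this h
  | trans X C Y h1 h2 ih1 ih2 =>
    intro hX hY a b ha hb p hp u v he
    rcases eqvgen_mem h1 with rfl | ⟨-, hC⟩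
    · exact ih2 hX hY a b ha hb p hp u v he
    obtain ⟨c, hc⟩ := hell C hC
    obtain ⟨wac⟩ := hT.isConnected.preconnected a c
    obtain ⟨wcb⟩ := hT.isConnected.preconnected c b
    have h1' := ih1 hX hC a c ha hc wac.bypass wac.bypass_isPath
    have h2' := ih2 hC hY c b hc hb wcb.bypass wcb.bypass_isPath
    have hpeq : (wac.bypass.append wcb.bypass).bypass = p := by
      obtain ⟨P, -, hun⟩ := hT.existsUnique_path a b
      rw [hun _ (wac.bypass.append wcb.bypass).bypass_isPath, hun p hp]
    rw [← hpeq] at he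
    have hsub : s(u, v) ∈ wac.bypass.edges ∨ s(u, v) ∈ wcb.bypass.edges := by
      have := (wac.bypass.append wcb.bypass).edges_bypass_subset he
      simpa [SimpleGraph.Walk.edges_append, List.mem_append] using this
    rcases hsub with h | h
    · exact h1' u v h
    · exact Relation.EqvGen.trans _ _ _ (h2' u v h) (Relation.EqvGen.symm _ _ h1)
end


/-- Let G act (without inversions) on a tree T, and let ℰ be a
conjugation-invariant family of subgroups, all elliptic in T, containing every edge
stabilizer. If A, B ∈ ℰ are equivalent for the equivalence relation generated by
inclusion and fix vertices a, b, then every edge stabilizer along [a,b] is equivalent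
to A. -/
theorem inclusion_relation_axiom3 {G V : Type*} [Group G] [MulAction G V]
    (T : SimpleGraph V) (hT : T.IsTree)
    (hact : ∀ (g : G) (u v : V), T.Adj u v → T.Adj (g • u) (g • v))
    (hni : ∀ (g : G) (u v : V), T.Adj u v → ¬(g • u = v ∧ g • v = u))
    (ℰ : Set (Subgroup G))
    (hconj : ∀ A ∈ ℰ, ∀ g : G, Subgroup.map (MulAut.conj g).toMonoidHom A ∈ ℰ)
    (hell : ∀ A ∈ ℰ, ∃ v : V, ∀ g ∈ A, g • v = v)
    (hedge : ∀ u v : V, T.Adj u v → edgeStab G u v ∈ ℰ)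
    (A : Subgroup G) (hA : A ∈ ℰ) (B : Subgroup G) (hB : B ∈ ℰ)
    (hsim : Relation.EqvGen (inclRel ℰ) A B)
    (a b : V) (hAfix : ∀ g ∈ A, g • a = a) (hBfix : ∀ g ∈ B, g • b = b) :
    ∀ (p : T.Walk a b), p.IsPath → ∀ u v : V, s(u, v) ∈ p.edges →
      Relation.EqvGen (inclRel ℰ) (edgeStab G u v) A := fun p hp u v he =>
  main_aux T hT hact ℰ hell hedge hsim hA hB a b hAfix hBfix p hp u v he
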